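/- Let d ≥ 2 and let V be any nonempty subset of the set {e_i + e_j − e_k : i, j, k ∈ {1,…,d}, k ≠ i, k ≠ j} ∪ {e_r : r ∈ {1,…,d}} ⊂ ℝ^d. Then the normalized volume of the convex hull of V, i.e. (d−1)! times the Lebesgue measure of the image of conv(V) under the projection ℝ^d → ℝ^{d−1} forgetting the last coordinate, satisfies (d−1)!·vol ≤ P_{d−1}(3) < 6^{d−1}, where P_n is the n-th Legendre polynomial. -/

import Mathlib

open MeasureTheory

/-- The `n`-th Legendre polynomial at `z`, via the Rodrigues formula. -/
noncomputable def legendre (n : ℕ) (z : ℝ) : ℝ :=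
  iteratedDeriv n (fun t : ℝ => (t ^ 2 - 1) ^ n) z / (2 ^ n * n.factorial)

open Finset Polynomial

lemma iteratedDeriv_polyeval (p : ℝ[X]) (n : ℕ) :
    iteratedDeriv n (fun t : ℝ => p.eval t) = fun z => (derivative^[n] p).eval z := by
  induction n generalizing p with
  | zero => simp
  | succ n ih =>
    rw [iteratedDeriv_succ', Function.iterate_succ']
    have : deriv (fun t : ℝ => p.eval t) = fun t => (derivative p).eval t := by
      funext t; exact Polynomial.deriv p
    rw [this, ih]
    simp only [← Function.iterate_succ_apply, Function.iterate_succ_apply', Function.comp_apply]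

lemma legendre_three (n : ℕ) :
    legendre n 3 = ∑ k ∈ range (n+1), ((n.choose k : ℝ))^2 * 2^(n-k) := by
  have h1 : (fun t : ℝ => (t ^ 2 - 1) ^ n)
      = fun t : ℝ => Polynomial.eval t (((X - C 1) ^ n) * ((X + C 1) ^ n)) := by
    funext t; simp [← mul_pow]; ring_nf
  rw [legendre, h1, iteratedDeriv_polyeval, Polynomial.iterate_derivative_mul]
  simp only [Polynomial.iterate_derivative_X_sub_pow, Polynomial.iterate_derivative_X_add_pow,
    eval_finset_sum]
  rw [div_eq_iff (by positivity), Finset.sum_mul]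
  refine Finset.sum_congr rfl fun i hi => ?_
  have hin : i ≤ n := Nat.lt_succ_iff.mp (Finset.mem_range.mp hi)
  have hni : n - (n - i) = i := Nat.sub_sub_self hin
  have hfac : ((n.choose i : ℝ)) * i.factorial * (n-i).factorial = n.factorial := by
    exact_mod_cast congrArg (Nat.cast : ℕ → ℝ) (Nat.choose_mul_factorial_mul_factorial hin)
  have h2 : (2:ℝ)^n = 2^i * 2^(n-i) := by rw [← pow_add, Nat.add_sub_cancel' hin]
  have h4 : (2:ℝ)^(n-i) * 2^(n-i) = 4^(n-i) := by rw [← mul_pow]; norm_num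
  simp only [smul_mul_assoc, eval_smul, mul_smul, eval_mul, eval_pow, eval_sub, eval_add, eval_X,
    eval_one, eval_C, hni, Nat.descFactorial_eq_factorial_mul_choose, smul_eq_mul]
  push_cast
  norm_num
  rw [Nat.choose_symm hin, h2, ← h4, ← hfac]
  ring

lemma choose_le_two_pow' (n k : ℕ) : n.choose k ≤ 2 ^ n := by
  calc n.choose k ≤ ∑ j ∈ range (n+1), n.choose j := by
        rcases le_or_gt k n with h | h
        · exact Finset.single_le_sum (f := fun j => n.choose j) (fun _ _ => Nat.zero_le _)
            (Finset.mem_range.mpr (Nat.lt_succ_of_le h))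
        · simp [Nat.choose_eq_zero_of_lt h]
    _ = 2 ^ n := Nat.sum_range_choose n
lemma sum_sq_lt (n : ℕ) (hn : 1 ≤ n) :
    (∑ k ∈ range (n+1), ((n.choose k : ℝ))^2 * 2^(n-k)) < 6 ^ n := by
  have key : (∑ k ∈ range (n+1), ((n.choose k : ℝ))^2 * 2^(n-k))
      < ∑ k ∈ range (n+1), (2:ℝ)^n * ((n.choose k : ℝ) * 2^(n-k)) := by
    refine Finset.sum_lt_sum (fun k _ => ?_) ⟨0, Finset.mem_range.mpr (Nat.succ_pos n), ?_⟩
    · have h := choose_le_two_pow' n k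
      have h' : ((n.choose k : ℝ)) ≤ 2^n := by exact_mod_cast h
      have hc : (0:ℝ) ≤ (n.choose k : ℝ) := by positivity
      have hp : (0:ℝ) ≤ (2:ℝ)^(n-k) := by positivity
      calc ((n.choose k : ℝ))^2 * 2^(n-k) = ((n.choose k : ℝ)) * ((n.choose k : ℝ) * 2^(n-k)) := by ring
        _ ≤ (2:ℝ)^n * ((n.choose k : ℝ) * 2^(n-k)) := by
            apply mul_le_mul_of_nonneg_right h' (by positivity)
    · have h1 : (2:ℝ) ≤ 2^n := by
        calc (2:ℝ) = 2^1 := (pow_one 2).symm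
          _ ≤ 2^n := by exact pow_le_pow_right₀ (by norm_num) hn
      simp only [Nat.choose_zero_right, Nat.cast_one, one_pow, Nat.sub_zero, one_mul, mul_one]
      nlinarith [pow_pos (show (0:ℝ)<2 by norm_num) n]
  have h2 : ∑ k ∈ range (n+1), (2:ℝ)^n * ((n.choose k : ℝ) * 2^(n-k)) = 6^n := by
    rw [← Finset.mul_sum]
    have : ∑ k ∈ range (n+1), ((n.choose k : ℝ) * 2^(n-k)) = 3^n := by
      have := add_pow (1:ℝ) 2 n
      simp at this
      rw [show (3:ℝ) = 1 + 2 by norm_num, this]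
      exact Finset.sum_congr rfl fun k hk => by ring
    rw [this, show (6:ℝ)^n = 2^n * 3^n by rw [← mul_pow]; norm_num]
  linarith [key, h2.le, h2.ge]

noncomputable def Fpoly (n : ℕ) (a b : ℝ) : ℝ :=
  ∑ k ∈ range (n+1), (n.choose k : ℝ) * a^k * b^(n-k) / (k.factorial * (n-k).factorial)

def Kset (n : ℕ) (a b : ℝ) : Set (Fin n → ℝ) :=
  {y | ∑ i, max (-(y i)) 0 ≤ a ∧ ∑ i, max (y i) 0 ≤ b}

lemma contKa (n : ℕ) : Continuous (fun y : Fin n → ℝ => ∑ i, max (-(y i)) 0) := by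
  exact continuous_finset_sum _ fun i _ => ((continuous_apply i).neg).max continuous_const

lemma contKb (n : ℕ) : Continuous (fun y : Fin n → ℝ => ∑ i, max (y i) 0) := by
  exact continuous_finset_sum _ fun i _ => (continuous_apply i).max continuous_const

lemma measurableSet_Kset (n : ℕ) (a b : ℝ) : MeasurableSet (Kset n a b) := by
  exact ((measurableSet_le (contKa n).measurable measurable_const).inter
    (measurableSet_le (contKb n).measurable measurable_const))

lemma Kset_empty_a {n : ℕ} {a b : ℝ} (h : a < 0) : Kset n a b = ∅ := by
  ext y
  simp only [Kset, Set.mem_setOf_eq, Set.mem_empty_iff_false, iff_false, not_and]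
  intro h1
  exact absurd (le_trans (Finset.sum_nonneg fun i _ => le_max_right _ _) h1) (not_le.mpr h)

lemma Kset_empty_b {n : ℕ} {a b : ℝ} (h : b < 0) : Kset n a b = ∅ := by
  ext y
  simp only [Kset, Set.mem_setOf_eq, Set.mem_empty_iff_false, iff_false, not_and]
  intro h1 h2
  exact absurd (le_trans (Finset.sum_nonneg fun i _ => le_max_right _ _) h2) (not_le.mpr h)

lemma Fpoly_nonneg {n : ℕ} {a b : ℝ} (ha : 0 ≤ a) (hb : 0 ≤ b) : 0 ≤ Fpoly n a b := by
  refine Finset.sum_nonneg fun k _ => by positivity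

lemma Kset_zero (a b : ℝ) (ha : 0 ≤ a) (hb : 0 ≤ b) :
    volume (Kset 0 a b) = ENNReal.ofReal (Fpoly 0 a b) := by
  have h1 : Kset 0 a b = Set.univ := by
    ext y; simp [Kset, ha, hb]
  have h2 : Fpoly 0 a b = 1 := by simp [Fpoly]
  rw [h1, h2, ENNReal.ofReal_one]
  have : (Set.univ : Set (Fin 0 → ℝ)) = Set.pi Set.univ (fun _ => Set.univ) := by simp
  rw [this, volume_pi_pi]
  simp

lemma Kset_succ_preimage (n : ℕ) (a b : ℝ) :
    Kset (n+1) a b = (MeasurableEquiv.piFinSuccAbove (fun _ : Fin (n+1) => ℝ) 0) ⁻¹'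
      {p : ℝ × (Fin n → ℝ) | max (-p.1) 0 + ∑ i, max (-(p.2 i)) 0 ≤ a ∧
        max p.1 0 + ∑ i, max (p.2 i) 0 ≤ b} := by
  ext y
  simp only [Kset, Set.mem_setOf_eq, Set.mem_preimage, MeasurableEquiv.piFinSuccAbove,
    Fin.sum_univ_succ]
  constructor
  · rintro ⟨h1, h2⟩
    refine ⟨?_, ?_⟩ <;> simpa [Fin.succAbove] using ‹_›
  · rintro ⟨h1, h2⟩
    refine ⟨?_, ?_⟩ <;> simpa [Fin.succAbove] using ‹_›

lemma slice_eq (n : ℕ) (a b t : ℝ) :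
    (Prod.mk t ⁻¹' {p : ℝ × (Fin n → ℝ) | max (-p.1) 0 + ∑ i, max (-(p.2 i)) 0 ≤ a ∧
        max p.1 0 + ∑ i, max (p.2 i) 0 ≤ b}) = Kset n (a - max (-t) 0) (b - max t 0) := by
  ext y
  simp only [Set.mem_preimage, Set.mem_setOf_eq, Kset]
  constructor
  · rintro ⟨h1, h2⟩; exact ⟨by linarith, by linarith⟩
  · rintro ⟨h1, h2⟩; exact ⟨by linarith, by linarith⟩

lemma contFa (n : ℕ) (b : ℝ) : Continuous fun x : ℝ => Fpoly n x b := by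
  unfold Fpoly
  exact continuous_finset_sum _ fun k _ =>
    ((continuous_const.mul (continuous_pow k)).mul continuous_const).div_const _

lemma contFb (n : ℕ) (a : ℝ) : Continuous fun y : ℝ => Fpoly n a y := by
  unfold Fpoly
  exact continuous_finset_sum _ fun k _ =>
    (continuous_const.mul (continuous_pow (n-k))).div_const _

lemma int_a (n : ℕ) (a b : ℝ) : ∫ u in (0:ℝ)..a, Fpoly n u b
    = ∑ k ∈ range (n+1),
      ((n.choose k : ℝ) * b^(n-k) / (k.factorial * (n-k).factorial)) * (a^(k+1)/((k:ℝ)+1)) := by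
  have h : ∀ u : ℝ, Fpoly n u b = ∑ k ∈ range (n+1),
      ((n.choose k : ℝ) * b^(n-k) / (k.factorial * (n-k).factorial)) * u^k :=
    fun u => Finset.sum_congr rfl fun k _ => by ring
  simp_rw [h]
  rw [intervalIntegral.integral_finset_sum (fun k hk => by exact
    ((continuous_const.mul (continuous_pow k)).intervalIntegrable 0 a))]
  refine Finset.sum_congr rfl fun k hk => ?_
  rw [intervalIntegral.integral_const_mul, integral_pow]
  norm_num

lemma int_b (n : ℕ) (a b : ℝ) : ∫ u in (0:ℝ)..b, Fpoly n a u
    = ∑ k ∈ range (n+1),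
      ((n.choose k : ℝ) * a^k / (k.factorial * (n-k).factorial)) * (b^(n-k+1)/((n-k : ℕ)+(1:ℝ))) := by
  have h : ∀ u : ℝ, Fpoly n a u = ∑ k ∈ range (n+1),
      ((n.choose k : ℝ) * a^k / (k.factorial * (n-k).factorial)) * u^(n-k) :=
    fun u => Finset.sum_congr rfl fun k _ => by ring
  simp_rw [h]
  rw [intervalIntegral.integral_finset_sum (fun k hk => by exact
    ((continuous_const.mul (continuous_pow (n-k))).intervalIntegrable 0 b))]
  refine Finset.sum_congr rfl fun k hk => ?_
  rw [intervalIntegral.integral_const_mul, integral_pow]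
  norm_num

lemma Fpoly_rec (n : ℕ) (a b : ℝ) :
    (∑ k ∈ range (n+1),
      ((n.choose k : ℝ) * b^(n-k) / (k.factorial * (n-k).factorial)) * (a^(k+1)/((k:ℝ)+1)))
    + (∑ k ∈ range (n+1),
      ((n.choose k : ℝ) * a^k / (k.factorial * (n-k).factorial)) * (b^(n-k+1)/((n-k : ℕ)+(1:ℝ))))
    = Fpoly (n+1) a b := by
  set g : ℕ → ℝ := fun k =>
    (n.choose k : ℝ) * a^(k+1) * b^(n-k) / ((k+1).factorial * (n-k).factorial) with hg
  set h : ℕ → ℝ := fun k =>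
    (n.choose (k+1) : ℝ) * a^(k+1) * b^(n-k) / ((k+1).factorial * (n-k).factorial) with hh
  have hA : (∑ k ∈ range (n+1),
      ((n.choose k : ℝ) * b^(n-k) / (k.factorial * (n-k).factorial)) * (a^(k+1)/((k:ℝ)+1)))
      = ∑ k ∈ range (n+1), g k := by
    refine Finset.sum_congr rfl fun k hk => ?_
    rw [hg]
    beta_reduce
    have : ((k+1).factorial : ℝ) = ((k:ℝ)+1) * (k.factorial : ℝ) := by
      rw [Nat.factorial_succ]; push_cast; ring
    rw [this]
    have hk1 : ((k:ℝ)+1) ≠ 0 := by positivity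
    have hkf : (k.factorial : ℝ) ≠ 0 := by positivity
    have hnkf : ((n-k).factorial : ℝ) ≠ 0 := by positivity
    field_simp
  have hB : (∑ k ∈ range (n+1),
      ((n.choose k : ℝ) * a^k / (k.factorial * (n-k).factorial)) * (b^(n-k+1)/((n-k : ℕ)+(1:ℝ))))
      = (∑ k ∈ range n, h k) + b^(n+1) / ((n+1).factorial : ℝ) := by
    rw [Finset.sum_range_succ']
    congr 1
    · refine Finset.sum_congr rfl fun k hk => ?_
      have hkn : k < n := Finset.mem_range.mp hk
      rw [hh]
      beta_reduce
      have e1 : n - (k+1) + 1 = n - k := by omega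
      have e2 : (n - (k+1) : ℕ) + (1:ℝ) = ((n-k : ℕ) : ℝ) := by
        have : n - (k+1) + 1 = n - k := by omega
        push_cast [← this]; ring
      have e3 : ((n-k).factorial : ℝ) = ((n-k : ℕ) : ℝ) * ((n-(k+1)).factorial : ℝ) := by
        have : n - k = (n - (k+1)) + 1 := by omega
        rw [this, Nat.factorial_succ]; push_cast; ring
      rw [e1, e2, e3]
      have h1 : ((n-k : ℕ) : ℝ) ≠ 0 := by
        have : 0 < n - k := by omega
        positivity
      rw [div_mul_div_comm]
      ring
    · simp only [Nat.choose_zero_right, pow_zero, Nat.sub_zero, Nat.factorial_zero,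
        Nat.cast_one, one_mul, mul_one, Nat.cast_zero, zero_add]
      rw [Nat.factorial_succ]
      have h2 : (n.factorial : ℝ) ≠ 0 := by positivity
      have h1 : ((n:ℝ)+1) ≠ 0 := by positivity
      push_cast
      rw [div_mul_div_comm]
      ring
  have hC : Fpoly (n+1) a b = (∑ k ∈ range (n+1), (g k + h k)) + b^(n+1) / ((n+1).factorial : ℝ) := by
    rw [Fpoly, Finset.sum_range_succ']
    congr 1
    · refine Finset.sum_congr rfl fun k hk => ?_
      have hkn : k ≤ n := Nat.lt_succ_iff.mp (Finset.mem_range.mp hk)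
      have e1 : n + 1 - (k+1) = n - k := by omega
      rw [hg, hh, e1, Nat.choose_succ_succ]
      beta_reduce
      push_cast
      ring
    · simp
  have hend : (∑ k ∈ range (n+1), h k) = ∑ k ∈ range n, h k := by
    rw [Finset.sum_range_succ, hh]
    simp [Nat.choose_succ_self]
  rw [hA, hB, hC, Finset.sum_add_distrib, hend]
  ring

lemma volume_Kset (n : ℕ) : ∀ a b : ℝ, 0 ≤ a → 0 ≤ b →
    volume (Kset n a b) = ENNReal.ofReal (Fpoly n a b) := by
  induction n with
  | zero => exact fun a b ha hb => Kset_zero a b ha hb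
  | succ n ih =>
    intro a b ha hb
    set T : Set (ℝ × (Fin n → ℝ)) := {p : ℝ × (Fin n → ℝ) |
      max (-p.1) 0 + ∑ i, max (-(p.2 i)) 0 ≤ a ∧ max p.1 0 + ∑ i, max (p.2 i) 0 ≤ b} with hT
    have hTmeas : MeasurableSet T := by
      apply MeasurableSet.inter
      · exact measurableSet_le
          (((continuous_fst.neg.max continuous_const).add
            ((contKa n).comp continuous_snd)).measurable) measurable_const
      · exact measurableSet_le
          (((continuous_fst.max continuous_const).add
            ((contKb n).comp continuous_snd)).measurable) measurable_const
    have h1 : volume (Kset (n+1) a b) = (volume.prod volume) T := by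
      rw [Kset_succ_preimage n a b, ← hT,
        (MeasureTheory.volume_preserving_piFinSuccAbove (fun _ : Fin (n+1) => ℝ)
          0).measure_preimage hTmeas.nullMeasurableSet]
      rw [Measure.volume_eq_prod]
    rw [h1, Measure.prod_apply hTmeas]
    have hslice : ∀ t : ℝ, volume (Prod.mk t ⁻¹' T) =
        (Set.Icc (-a) 0).indicator (fun t => ENNReal.ofReal (Fpoly n (a+t) b)) t +
        (Set.Ioc 0 b).indicator (fun t => ENNReal.ofReal (Fpoly n a (b-t))) t := by
      intro t
      rw [hT, slice_eq]
      rcases le_or_gt t 0 with h | h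
      · have hmax1 : max (-t) 0 = -t := max_eq_left (by linarith)
        have hmax2 : max t 0 = 0 := max_eq_right h
        rw [hmax1, hmax2, sub_neg_eq_add, sub_zero,
          Set.indicator_of_notMem (s := Set.Ioc 0 b) (by simp only [Set.mem_Ioc, not_and]; intro h0; linarith), add_zero]
        rcases le_or_gt (-a) t with h' | h'
        · rw [Set.indicator_of_mem (Set.mem_Icc.mpr ⟨h', h⟩)]
          exact ih (a+t) b (by linarith) hb
        · rw [Set.indicator_of_notMem (by simp only [Set.mem_Icc, not_and]; intro h0; linarith),
            Kset_empty_a (by linarith)]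
          simp
      · have hmax1 : max (-t) 0 = 0 := max_eq_right (by linarith)
        have hmax2 : max t 0 = t := max_eq_left (by linarith)
        rw [hmax1, hmax2, sub_zero,
          Set.indicator_of_notMem (s := Set.Icc (-a) 0) (by simp only [Set.mem_Icc, not_and]; intro h0; linarith), zero_add]
        rcases le_or_gt t b with h' | h'
        · rw [Set.indicator_of_mem (Set.mem_Ioc.mpr ⟨h, h'⟩)]
          exact ih a (b-t) ha (by linarith)
        · rw [Set.indicator_of_notMem (by simp only [Set.mem_Ioc, not_and]; intro h0; linarith),
            Kset_empty_b (by linarith)]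
          simp
    rw [lintegral_congr hslice]
    have m1 : Measurable fun t : ℝ => ENNReal.ofReal (Fpoly n (a+t) b) :=
      (ENNReal.continuous_ofReal.comp
        ((contFa n b).comp (continuous_const.add continuous_id))).measurable
    have m2 : Measurable fun t : ℝ => ENNReal.ofReal (Fpoly n a (b-t)) :=
      (ENNReal.continuous_ofReal.comp
        ((contFb n a).comp (continuous_const.sub continuous_id))).measurable
    rw [lintegral_add_left (m1.indicator measurableSet_Icc)]
    rw [lintegral_indicator measurableSet_Icc, lintegral_indicator measurableSet_Ioc]
    have i1 : ∫⁻ t in Set.Icc (-a) 0, ENNReal.ofReal (Fpoly n (a+t) b)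
        = ENNReal.ofReal (∫ t in Set.Icc (-a) 0, Fpoly n (a+t) b) := by
      rw [ofReal_integral_eq_lintegral_ofReal]
      · exact ((contFa n b).comp (continuous_const.add continuous_id)).integrableOn_Icc
      · exact ae_restrict_of_forall_mem measurableSet_Icc
          (fun t ht => Fpoly_nonneg (by linarith [ht.1]) hb)
    have i2 : ∫⁻ t in Set.Ioc 0 b, ENNReal.ofReal (Fpoly n a (b-t))
        = ENNReal.ofReal (∫ t in Set.Ioc 0 b, Fpoly n a (b-t)) := by
      rw [ofReal_integral_eq_lintegral_ofReal]
      · exact ((contFb n a).comp (continuous_const.sub continuous_id)).integrableOn_Ioc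
      · exact ae_restrict_of_forall_mem measurableSet_Ioc
          (fun t ht => Fpoly_nonneg ha (by linarith [ht.2]))
    rw [i1, i2]
    have r1 : ∫ t in Set.Icc (-a) 0, Fpoly n (a+t) b = ∫ u in (0:ℝ)..a, Fpoly n u b := by
      rw [MeasureTheory.integral_Icc_eq_integral_Ioc,
        ← intervalIntegral.integral_of_le (by linarith : -a ≤ (0:ℝ))]
      have h := intervalIntegral.integral_comp_add_left (a := -a) (b := 0)
        (fun u => Fpoly n u b) a
      simpa using h
    have r2 : ∫ t in Set.Ioc 0 b, Fpoly n a (b-t) = ∫ u in (0:ℝ)..b, Fpoly n a u := by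
      rw [← intervalIntegral.integral_of_le hb]
      have h := intervalIntegral.integral_comp_sub_left (a := (0:ℝ)) (b := b)
        (fun u => Fpoly n a u) b
      simpa using h
    rw [r1, r2, ← ENNReal.ofReal_add (by
        rw [int_a]
        exact Finset.sum_nonneg fun k hk => by positivity) (by
        rw [int_b]
        exact Finset.sum_nonneg fun k hk => by positivity)]
    rw [int_a, int_b, Fpoly_rec]

lemma convex_Kset (n : ℕ) (a b : ℝ) : Convex ℝ (Kset n a b) := by
  rintro x ⟨hx1, hx2⟩ y ⟨hy1, hy2⟩ p q hp hq hpq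
  have key : ∀ (u v : ℝ), max (-(p * u + q * v)) 0 ≤ p * max (-u) 0 + q * max (-v) 0 := by
    intro u v
    have h1 := mul_le_mul_of_nonneg_left (le_max_left (-u) 0) hp
    have h2 := mul_le_mul_of_nonneg_left (le_max_left (-v) 0) hq
    have h3 := mul_le_mul_of_nonneg_left (le_max_right (-u) 0) hp
    have h4 := mul_le_mul_of_nonneg_left (le_max_right (-v) 0) hq
    refine max_le (by nlinarith) (by nlinarith)
  have key2 : ∀ (u v : ℝ), max (p * u + q * v) 0 ≤ p * max u 0 + q * max v 0 := by
    intro u v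
    have h := key (-u) (-v)
    simp only [neg_neg] at h
    refine le_trans ?_ h
    apply le_of_eq
    congr 1
    ring
  constructor
  · calc ∑ i, max (-((p • x + q • y) i)) 0
        ≤ ∑ i, (p * max (-(x i)) 0 + q * max (-(y i)) 0) :=
          Finset.sum_le_sum fun i _ => key (x i) (y i)
      _ = p * (∑ i, max (-(x i)) 0) + q * (∑ i, max (-(y i)) 0) := by
          rw [Finset.sum_add_distrib, Finset.mul_sum, Finset.mul_sum]
      _ ≤ p * a + q * a := by
          have := mul_le_mul_of_nonneg_left hx1 hp
          have := mul_le_mul_of_nonneg_left hy1 hq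
          linarith
      _ = a := by rw [← add_mul, hpq, one_mul]
  · calc ∑ i, max ((p • x + q • y) i) 0
        ≤ ∑ i, (p * max (x i) 0 + q * max (y i) 0) :=
          Finset.sum_le_sum fun i _ => key2 (x i) (y i)
      _ = p * (∑ i, max (x i) 0) + q * (∑ i, max (y i) 0) := by
          rw [Finset.sum_add_distrib, Finset.mul_sum, Finset.mul_sum]
      _ ≤ p * b + q * b := by
          have := mul_le_mul_of_nonneg_left hx2 hp
          have := mul_le_mul_of_nonneg_left hy2 hq
          linarith
      _ = b := by rw [← add_mul, hpq, one_mul]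

lemma single_mem_Kset (d : ℕ) (r : Fin d) : (Pi.single r (1:ℝ) : Fin d → ℝ) ∈ Kset d 1 2 := by
  constructor
  · have h : ∀ l, max (-((Pi.single r (1:ℝ) : Fin d → ℝ) l)) 0 = 0 := by
      intro l
      rcases eq_or_ne l r with rfl | hl
      · simp
      · simp [Pi.single_apply, hl]
    simp only [h]
    simp
  · have h : ∀ l, max ((Pi.single r (1:ℝ) : Fin d → ℝ) l) 0 = (Pi.single r (1:ℝ) : Fin d → ℝ) l := by
      intro l
      rcases eq_or_ne l r with rfl | hl
      · simp
      · simp [Pi.single_apply, hl]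
    rw [Finset.sum_congr rfl fun l _ => h l, Finset.sum_pi_single']
    simp

lemma triple_mem_Kset (d : ℕ) (i j k : Fin d) (hki : k ≠ i) (hkj : k ≠ j) :
    (Pi.single i (1:ℝ) + Pi.single j (1:ℝ) - Pi.single k (1:ℝ)) ∈ Kset d 1 2 := by
  set x : Fin d → ℝ := Pi.single i (1:ℝ) + Pi.single j (1:ℝ) - Pi.single k (1:ℝ) with hx
  have hxl : ∀ l, x l = (if l = i then (1:ℝ) else 0) + (if l = j then 1 else 0)
      - (if l = k then 1 else 0) := by
    intro l
    simp [hx, Pi.single_apply]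
  constructor
  · have h : ∀ l, max (-(x l)) 0 = (Pi.single k (1:ℝ) : Fin d → ℝ) l := by
      intro l
      rw [hxl l, Pi.single_apply]
      by_cases hli : l = i <;> by_cases hlj : l = j <;> by_cases hlk : l = k <;>
          simp_all <;> norm_num
    rw [Finset.sum_congr rfl fun l _ => h l, Finset.sum_pi_single']
    simp
  · have h : ∀ l, max (x l) 0 = (Pi.single i (1:ℝ) : Fin d → ℝ) l + (Pi.single j (1:ℝ) : Fin d → ℝ) l := by
      intro l
      rw [hxl l, Pi.single_apply, Pi.single_apply]
      by_cases hli : l = i <;> by_cases hlj : l = j <;> by_cases hlk : l = k <;>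
          simp_all <;> norm_num
    rw [Finset.sum_congr rfl fun l _ => h l, Finset.sum_add_distrib,
      Finset.sum_pi_single', Finset.sum_pi_single']
    simp
    norm_num

lemma fact_Fpoly (n : ℕ) :
    ((n.factorial : ℝ)) * Fpoly n 1 2 = ∑ k ∈ range (n+1), ((n.choose k:ℝ))^2 * 2^(n-k) := by
  rw [Fpoly, Finset.mul_sum]
  refine Finset.sum_congr rfl fun k hk => ?_
  have hkn : k ≤ n := Nat.lt_succ_iff.mp (Finset.mem_range.mp hk)
  have hfac : ((n.choose k : ℝ)) * k.factorial * (n-k).factorial = n.factorial := by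
    exact_mod_cast congrArg (Nat.cast : ℕ → ℝ) (Nat.choose_mul_factorial_mul_factorial hkn)
  rw [one_pow, ← hfac]
  have h2 : (k.factorial : ℝ) ≠ 0 := by positivity
  have h3 : ((n-k).factorial : ℝ) ≠ 0 := by positivity
  field_simp

/-- The normalized volume of the convex hull of any nonempty subset of
`{e_i + e_j − e_k : k ≠ i, k ≠ j} ∪ {e_r}` is at most `P_{d−1}(3) < 6^{d−1}`. -/
theorem stmt_3 (d : ℕ) (hd : 2 ≤ d)
    (V : Set (Fin d → ℝ)) (hne : V.Nonempty)
    (hV : V ⊆ {x | ∃ i j k : Fin d, k ≠ i ∧ k ≠ j ∧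
        x = Pi.single i (1 : ℝ) + Pi.single j (1 : ℝ) - Pi.single k (1 : ℝ)} ∪
      {x | ∃ r : Fin d, x = Pi.single r (1 : ℝ)}) :
    ((d - 1).factorial : ENNReal) *
        volume ((fun x : Fin d → ℝ => fun i : Fin (d - 1) =>
            x (Fin.castLE (Nat.sub_le d 1) i)) '' convexHull ℝ V)
      ≤ ENNReal.ofReal (legendre (d - 1) 3) ∧
    legendre (d - 1) 3 < 6 ^ (d - 1) := by
  constructor
  · have hVK : V ⊆ Kset d 1 2 := by
      intro x hx
      rcases hV hx with ⟨i, j, k, hki, hkj, rfl⟩ | ⟨r, rfl⟩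
      · exact triple_mem_Kset d i j k hki hkj
      · exact single_mem_Kset d r
    have h1 : convexHull ℝ V ⊆ Kset d 1 2 := convexHull_min hVK (convex_Kset d 1 2)
    have h2 : (fun x : Fin d → ℝ => fun i : Fin (d - 1) =>
        x (Fin.castLE (Nat.sub_le d 1) i)) '' convexHull ℝ V ⊆ Kset (d-1) 1 2 := by
      rintro _ ⟨x, hx, rfl⟩
      obtain ⟨ha1, ha2⟩ := h1 hx
      have emb : Function.Injective (Fin.castLE (Nat.sub_le d 1)) := Fin.castLE_injective _
      constructor
      · refine le_trans ?_ ha1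
        have hs := Finset.sum_map (Finset.univ : Finset (Fin (d-1)))
          ⟨Fin.castLE (Nat.sub_le d 1), emb⟩ (fun j => max (-(x j)) 0)
        simp only [Function.Embedding.coeFn_mk] at hs
        rw [← hs]
        exact Finset.sum_le_sum_of_subset_of_nonneg (Finset.subset_univ _)
          (fun j _ _ => le_max_right _ _)
      · refine le_trans ?_ ha2
        have hs := Finset.sum_map (Finset.univ : Finset (Fin (d-1)))
          ⟨Fin.castLE (Nat.sub_le d 1), emb⟩ (fun j => max (x j) 0)
        simp only [Function.Embedding.coeFn_mk] at hs
        rw [← hs]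
        exact Finset.sum_le_sum_of_subset_of_nonneg (Finset.subset_univ _)
          (fun j _ _ => le_max_right _ _)
    calc ((d - 1).factorial : ENNReal) *
        volume ((fun x : Fin d → ℝ => fun i : Fin (d - 1) =>
            x (Fin.castLE (Nat.sub_le d 1) i)) '' convexHull ℝ V)
        ≤ ((d - 1).factorial : ENNReal) * ENNReal.ofReal (Fpoly (d-1) 1 2) := by
          refine mul_le_mul_right ?_ _
          exact (measure_mono h2).trans_eq
            (volume_Kset (d-1) 1 2 (by norm_num) (by norm_num))
      _ = ENNReal.ofReal (((d-1).factorial : ℝ) * Fpoly (d-1) 1 2) := by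
          rw [ENNReal.ofReal_mul (by positivity), ENNReal.ofReal_natCast]
      _ = ENNReal.ofReal (legendre (d - 1) 3) := by
          rw [fact_Fpoly, ← legendre_three]
  · rw [legendre_three]
    exact sum_sq_lt _ (by omega)
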